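/- Let A be a 2n×2n Hermitian matrix and M its top-left n×n principal submatrix. Then for each k = 1, …, n, the eigenvalues satisfy λ_k(A) ≤ λ_k(M) ≤ λ_{k+n}(A), where eigenvalues are listed in increasing order (Cauchy interlacing for a principal submatrix of half the size). -/

import Mathlib

open Matrix

/-- Eigenvalues of a Hermitian matrix listed in increasing order. -/
noncomputable def sortedEigs {m : ℕ} {𝕜 : Type*} [RCLike 𝕜] {A : Matrix (Fin m) (Fin m) 𝕜}
    (hA : A.IsHermitian) : Fin m → ℝ :=
  hA.eigenvalues ∘ Tuple.sort hA.eigenvalues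

namespace CauchyInterlacing

open Module
local notation "⟪" x ", " y "⟫" => @inner ℂ _ _ x y

noncomputable section

lemma conj_mul_re' (r : ℝ) (a : ℂ) :
    RCLike.re ((starRingEnd ℂ) a * ((r:ℂ) * a)) = r * ‖a‖^2 := by
  have : (starRingEnd ℂ) a * ((r:ℂ) * a) = (r:ℂ) * ((starRingEnd ℂ) a * a) := by ring
  simp [this, Complex.conj_mul', ← Complex.ofReal_pow, ← Complex.ofReal_mul,
    RCLike.re]

lemma conj_mul_re (a : ℂ) : RCLike.re ((starRingEnd ℂ) a * a) = ‖a‖^2 := by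
  simp [Complex.conj_mul', ← Complex.ofReal_pow, RCLike.re]

lemma inner_eq_zero_of_mem_span {m : ℕ} {v : Fin m → EuclideanSpace ℂ (Fin m)}
    (hv : Orthonormal ℂ v) {s : Set (Fin m)} {i : Fin m} (hi : i ∉ s)
    {x : EuclideanSpace ℂ (Fin m)} (hx : x ∈ Submodule.span ℂ (v '' s)) :
    ⟪v i, x⟫ = 0 := by
  induction hx using Submodule.span_induction with
  | mem y hy =>
      obtain ⟨j, hj, rfl⟩ := hy
      exact hv.2 (fun h => hi (h ▸ hj))
  | zero => exact inner_zero_right _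
  | add y z _ _ hy hz => rw [inner_add_right, hy, hz, add_zero]
  | smul c y _ hy => rw [inner_smul_right, hy, mul_zero]

lemma rayleigh_lower {m : ℕ} {A : Matrix (Fin m) (Fin m) ℂ} (hA : A.IsHermitian)
    (U : OrthonormalBasis (Fin m) ℂ (EuclideanSpace ℂ (Fin m)))
    (μ : Fin m → ℝ) (hU : ∀ i, Matrix.toEuclideanLin A (U i) = (μ i : ℂ) • U i)
    (s : Set (Fin m)) (c : ℝ) (hc : ∀ i ∈ s, c ≤ μ i)
    (x : EuclideanSpace ℂ (Fin m)) (hx : x ∈ Submodule.span ℂ (U '' s)) :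
    c * ‖x‖^2 ≤ RCLike.re ⟪x, Matrix.toEuclideanLin A x⟫ := by
  classical
  have hsym : (Matrix.toEuclideanLin A).IsSymmetric :=
    Matrix.isHermitian_iff_isSymmetric.1 hA
  set T := Matrix.toEuclideanLin A with hT
  set cf : Fin m → ℂ := fun i => ⟪U i, x⟫ with hcf
  have hrepr : ∀ y : EuclideanSpace ℂ (Fin m), ∀ i, U.repr y i = ⟪U i, y⟫ :=
    fun y i => U.repr_apply_apply y i
  have hinner : ∀ y z : EuclideanSpace ℂ (Fin m),
      ⟪y, z⟫ = ∑ i, (starRingEnd ℂ) (U.repr y i) * U.repr z i := by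
    intro y z
    rw [← U.repr.inner_map_map y z, PiLp.inner_apply]
    simp [RCLike.inner_apply]
    exact Finset.sum_congr rfl fun _ _ => mul_comm _ _
  have hTrepr : ∀ i, U.repr (T x) i = (μ i : ℂ) * U.repr x i := by
    intro i
    rw [hrepr, hrepr, ← hsym (U i) x, hU i, inner_smul_left]
    simp
  have hxT : RCLike.re ⟪x, T x⟫ = ∑ i, μ i * ‖cf i‖^2 := by
    rw [hinner, map_sum]
    congr 1; funext i
    rw [hTrepr i, hrepr]
    exact conj_mul_re' (μ i) (cf i)
  have hxx : ‖x‖^2 = ∑ i, ‖cf i‖^2 := by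
    have h2 : RCLike.re ⟪x, x⟫ = ‖x‖^2 := by
      rw [@inner_self_eq_norm_sq ℂ]
    rw [← h2, hinner, map_sum]
    congr 1; funext i
    rw [hrepr]
    exact conj_mul_re (cf i)
  have hz : ∀ i ∉ s, cf i = 0 := fun i hi =>
    inner_eq_zero_of_mem_span U.orthonormal hi hx
  rw [hxT, hxx, Finset.mul_sum]
  apply Finset.sum_le_sum
  intro i _
  by_cases his : i ∈ s
  · have : (0:ℝ) ≤ ‖cf i‖^2 := by positivity
    nlinarith [hc i his]
  · simp [hz i his]

lemma rayleigh_upper {m : ℕ} {A : Matrix (Fin m) (Fin m) ℂ} (hA : A.IsHermitian)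
    (U : OrthonormalBasis (Fin m) ℂ (EuclideanSpace ℂ (Fin m)))
    (μ : Fin m → ℝ) (hU : ∀ i, Matrix.toEuclideanLin A (U i) = (μ i : ℂ) • U i)
    (s : Set (Fin m)) (c : ℝ) (hc : ∀ i ∈ s, μ i ≤ c)
    (x : EuclideanSpace ℂ (Fin m)) (hx : x ∈ Submodule.span ℂ (U '' s)) :
    RCLike.re ⟪x, Matrix.toEuclideanLin A x⟫ ≤ c * ‖x‖^2 := by
  have hU' : ∀ i, Matrix.toEuclideanLin (-A) (U i) = ((-μ i : ℝ) : ℂ) • U i := by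
    intro i
    rw [map_neg, LinearMap.neg_apply, hU i]
    push_cast
    rw [neg_smul]
  have := rayleigh_lower hA.neg U (fun i => -μ i) hU' s (-c)
    (fun i hi => neg_le_neg (hc i hi)) x hx
  have hneg : RCLike.re ⟪x, Matrix.toEuclideanLin (-A) x⟫
      = -RCLike.re ⟪x, Matrix.toEuclideanLin A x⟫ := by
    rw [map_neg, LinearMap.neg_apply, inner_neg_right, map_neg]
  rw [hneg] at this
  linarith

lemma exists_ne_zero_mem_inf {m : ℕ} (S T : Submodule ℂ (EuclideanSpace ℂ (Fin m)))
    (h : m < finrank ℂ S + finrank ℂ T) : ∃ x, x ∈ S ⊓ T ∧ x ≠ 0 := by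
  have h1 := Submodule.finrank_sup_add_finrank_inf_eq S T
  have h2 : finrank ℂ ↥(S ⊔ T) ≤ m := by
    simpa [finrank_euclideanSpace] using Submodule.finrank_le (S ⊔ T)
  have h3 : 0 < finrank ℂ ↥(S ⊓ T) := by omega
  have h4 : S ⊓ T ≠ ⊥ := by
    intro hbot; rw [hbot, finrank_bot] at h3; exact lt_irrefl _ h3
  obtain ⟨x, hx, hx0⟩ := Submodule.exists_mem_ne_zero_of_ne_bot h4
  exact ⟨x, hx, hx0⟩

lemma finrank_span_orthonormal {ι : Type*} [Fintype ι] [DecidableEq ι]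
    {E : Type*} [NormedAddCommGroup E] [InnerProductSpace ℂ E]
    {v : ι → E} (hv : Orthonormal ℂ v) (s : Finset ι) :
    finrank ℂ (Submodule.span ℂ (v '' ↑s)) = s.card := by
  have hli : LinearIndependent ℂ ((↑) : (v '' ↑s) → E) :=
    (hv.linearIndependent.linearIndepOn_id).mono (Set.image_subset_range v ↑s)
  classical
  rw [finrank_span_set_eq_card (hs := hli), Set.toFinset_image]
  simp [Finset.card_image_of_injective _ hv.linearIndependent.injective]

variable {n : ℕ}

lemma natAdd_eq_addNat (i : Fin n) : Fin.natAdd n i = i.addNat n := by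
  ext; simp [Nat.add_comm]

lemma append_addNat {α : Sort*} (u v : Fin n → α) (i : Fin n) :
    Fin.append u v (i.addNat n) = v i := by
  rw [← natAdd_eq_addNat, Fin.append_right]

def padL (n : ℕ) : EuclideanSpace ℂ (Fin n) →ₗ[ℂ] EuclideanSpace ℂ (Fin (n + n)) where
  toFun y := (WithLp.equiv 2 _).symm (Fin.append ((WithLp.equiv 2 _) y) 0)
  map_add' y z := by
    ext i
    refine Fin.addCases (fun i => ?_) (fun i => ?_) i <;>
      simp [Fin.append_left, append_addNat, PiLp.toLp_apply]
  map_smul' c y := by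
    ext i
    refine Fin.addCases (fun i => ?_) (fun i => ?_) i <;>
      simp [Fin.append_left, append_addNat, PiLp.toLp_apply]

@[simp] lemma padL_castAdd (y : EuclideanSpace ℂ (Fin n)) (i : Fin n) :
    padL n y (Fin.castAdd n i) = y i := by
  simp [padL, Fin.append_left, PiLp.toLp_apply]

@[simp] lemma padL_natAdd (y : EuclideanSpace ℂ (Fin n)) (i : Fin n) :
    padL n y (Fin.natAdd n i) = 0 := by
  simp [padL, append_addNat, Fin.append_right, PiLp.toLp_apply]

lemma padL_inj : Function.Injective (padL n) := by
  intro y z h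
  ext i
  rw [← padL_castAdd y i, ← padL_castAdd z i, h]

lemma padL_inner (y z : EuclideanSpace ℂ (Fin n)) :
    ⟪padL n y, padL n z⟫ = ⟪y, z⟫ := by
  rw [PiLp.inner_apply, PiLp.inner_apply, Fin.sum_univ_add]
  simp [RCLike.inner_apply, ← natAdd_eq_addNat, -Fin.natAdd_eq_addNat]

lemma padL_norm_sq (y : EuclideanSpace ℂ (Fin n)) : ‖padL n y‖^2 = ‖y‖^2 := by
  rw [← @inner_self_eq_norm_sq ℂ, ← @inner_self_eq_norm_sq ℂ, padL_inner]

lemma padL_quad (A : Matrix (Fin (n + n)) (Fin (n + n)) ℂ)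
    (M : Matrix (Fin n) (Fin n) ℂ)
    (hMdef : ∀ i j : Fin n, M i j = A (Fin.castAdd n i) (Fin.castAdd n j))
    (y : EuclideanSpace ℂ (Fin n)) :
    ⟪padL n y, Matrix.toEuclideanLin A (padL n y)⟫
      = ⟪y, Matrix.toEuclideanLin M y⟫ := by
  rw [PiLp.inner_apply, PiLp.inner_apply]
  have hA : ∀ i : Fin (n+n), Matrix.toEuclideanLin A (padL n y) i
      = ∑ j : Fin (n+n), A i j * padL n y j := fun i => rfl
  have hMv : ∀ i : Fin n, Matrix.toEuclideanLin M y i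
      = ∑ j : Fin n, M i j * y j := fun i => rfl
  simp only [RCLike.inner_apply, hA, hMv, Fin.sum_univ_add, padL_castAdd, padL_natAdd,
    map_zero, zero_mul, mul_zero, Finset.sum_const_zero, add_zero, hMdef]

/-- The sorted orthonormal eigenbasis. -/
def sortedBasis {m : ℕ} {A : Matrix (Fin m) (Fin m) ℂ} (hA : A.IsHermitian) :
    OrthonormalBasis (Fin m) ℂ (EuclideanSpace ℂ (Fin m)) :=
  hA.eigenvectorBasis.reindex (Tuple.sort hA.eigenvalues).symm

lemma sortedBasis_apply {m : ℕ} {A : Matrix (Fin m) (Fin m) ℂ} (hA : A.IsHermitian) (i : Fin m) :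
    sortedBasis hA i = hA.eigenvectorBasis (Tuple.sort hA.eigenvalues i) := by
  simp [sortedBasis]

lemma sortedBasis_eig {m : ℕ} {A : Matrix (Fin m) (Fin m) ℂ} (hA : A.IsHermitian) (i : Fin m) :
    Matrix.toEuclideanLin A (sortedBasis hA i) = ((sortedEigs hA i : ℝ) : ℂ) • sortedBasis hA i := by
  ext j
  have := congrFun (hA.mulVec_eigenvectorBasis (Tuple.sort hA.eigenvalues i)) j
  rw [sortedBasis_apply]
  have h1 : Matrix.toEuclideanLin A (hA.eigenvectorBasis (Tuple.sort hA.eigenvalues i)) j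
      = (A *ᵥ ⇑(hA.eigenvectorBasis (Tuple.sort hA.eigenvalues i))) j := rfl
  rw [h1, this]
  simp [sortedEigs, Complex.real_smul]

lemma sortedEigs_monotone {m : ℕ} {A : Matrix (Fin m) (Fin m) ℂ} (hA : A.IsHermitian) :
    Monotone (sortedEigs hA) :=
  Tuple.monotone_sort hA.eigenvalues

/-- The common core: a subspace-intersection argument. -/
lemma interlace_core (A : Matrix (Fin (n + n)) (Fin (n + n)) ℂ) (hA : A.IsHermitian)
    (M : Matrix (Fin n) (Fin n) ℂ)
    (hMdef : ∀ i j : Fin n, M i j = A (Fin.castAdd n i) (Fin.castAdd n j))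
    (hM : M.IsHermitian)
    (sA : Finset (Fin (n + n))) (sM : Finset (Fin n)) (c1 c2 : ℝ)
    (hcard : n + n < sA.card + sM.card)
    (hbound : ∀ y : EuclideanSpace ℂ (Fin n), y ≠ 0 →
      y ∈ Submodule.span ℂ (sortedBasis hM '' ↑sM) →
      padL n y ∈ Submodule.span ℂ (sortedBasis hA '' ↑sA) →
      c1 * ‖y‖^2 ≤ c2 * ‖y‖^2) :
    c1 ≤ c2 := by
  classical
  set W := sortedBasis hM
  set U := sortedBasis hA
  set S : Submodule ℂ (EuclideanSpace ℂ (Fin (n + n))) := Submodule.span ℂ (U '' ↑sA)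
  set T : Submodule ℂ (EuclideanSpace ℂ (Fin (n + n))) :=
    Submodule.map (padL n) (Submodule.span ℂ (W '' ↑sM))
  have hWpad : Orthonormal ℂ (fun i => padL n (W i)) := by
    rw [orthonormal_iff_ite]
    intro i j
    rw [padL_inner]
    exact orthonormal_iff_ite.1 W.orthonormal i j
  have hfS : finrank ℂ S = sA.card := finrank_span_orthonormal U.orthonormal sA
  have hfT : finrank ℂ T = sM.card := by
    have himg : (padL n) '' (W '' ↑sM) = (fun i => padL n (W i)) '' ↑sM := by
      rw [Set.image_image]
    rw [show T = Submodule.span ℂ ((fun i => padL n (W i)) '' ↑sM) by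
      rw [← himg, ← Submodule.map_span]]
    exact finrank_span_orthonormal hWpad sM
  obtain ⟨x, ⟨hxS, hxT⟩, hx0⟩ := exists_ne_zero_mem_inf S T (by omega)
  obtain ⟨y, hy, rfl⟩ := hxT
  have hy0 : y ≠ 0 := fun h => hx0 (by rw [h, map_zero])
  have hy2 : (0:ℝ) < ‖y‖^2 := pow_pos (norm_pos_iff.mpr hy0) 2
  have := hbound y hy0 hy hxS
  exact le_of_mul_le_mul_right (by linarith [this]) hy2

end

end CauchyInterlacing

open CauchyInterlacing Module in
theorem stmt_11 (n : ℕ) (A : Matrix (Fin (n + n)) (Fin (n + n)) ℂ)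
    (hA : A.IsHermitian)
    (M : Matrix (Fin n) (Fin n) ℂ)
    (hMdef : ∀ i j : Fin n, M i j = A (Fin.castAdd n i) (Fin.castAdd n j))
    (hM : M.IsHermitian) :
    ∀ k : Fin n,
      sortedEigs hA (Fin.castAdd n k) ≤ sortedEigs hM k ∧
      sortedEigs hM k ≤ sortedEigs hA (Fin.natAdd n k) := by
  intro k
  have hk : (k : ℕ) < n := k.is_lt
  constructor
  · -- λ_k(A) ≤ λ_k(M)
    refine interlace_core A hA M hMdef hM (Finset.Ici (Fin.castAdd n k)) (Finset.Iic k)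
      _ _ ?_ ?_
    · rw [Fin.card_Ici, Fin.card_Iic]
      simp only [Fin.coe_castAdd]
      omega
    · intro y hy0 hyM hyA
      have h1 := rayleigh_lower hA (sortedBasis hA) (sortedEigs hA)
        (fun i => sortedBasis_eig hA i) (↑(Finset.Ici (Fin.castAdd n k)))
        (sortedEigs hA (Fin.castAdd n k))
        (fun i hi => sortedEigs_monotone hA (by simpa using hi)) _ hyA
      have h2 := rayleigh_upper hM (sortedBasis hM) (sortedEigs hM)
        (fun i => sortedBasis_eig hM i) (↑(Finset.Iic k)) (sortedEigs hM k)
        (fun i hi => sortedEigs_monotone hM (by simpa using hi)) _ hyM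
      have hq := padL_quad A M hMdef y
      have hn := padL_norm_sq y
      rw [hq, hn] at h1
      linarith
  · -- λ_k(M) ≤ λ_{k+n}(A)
    refine interlace_core A hA M hMdef hM (Finset.Iic (Fin.natAdd n k)) (Finset.Ici k)
      _ _ ?_ ?_
    · rw [Fin.card_Ici, Fin.card_Iic]
      simp only [Fin.coe_natAdd]
      omega
    · intro y hy0 hyM hyA
      have h1 := rayleigh_lower hM (sortedBasis hM) (sortedEigs hM)
        (fun i => sortedBasis_eig hM i) (↑(Finset.Ici k)) (sortedEigs hM k)
        (fun i hi => sortedEigs_monotone hM (by simpa using hi)) _ hyM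
      have h2 := rayleigh_upper hA (sortedBasis hA) (sortedEigs hA)
        (fun i => sortedBasis_eig hA i) (↑(Finset.Iic (Fin.natAdd n k)))
        (sortedEigs hA (Fin.natAdd n k))
        (fun i hi => sortedEigs_monotone hA (by simpa using hi)) _ hyA
      have hq := padL_quad A M hMdef y
      have hn := padL_norm_sq y
      rw [hq, hn] at h2
      linarith
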